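/- Let η ≥ 2 and (δT,δX) ∈ ℤ×ℕ with δ := δT+η·δX ≥ 0. If max(δ/(η+1), δT) < q ≤ δ, then the minimum distance of C_η(δT,δX) equals d_η(δT,δX) = q − ⌊(δ−q)/η⌋. -/

import Mathlib

open MvPolynomial

attribute [local instance] Classical.propDecidable

set_option linter.unusedSectionVars false
set_option maxHeartbeats 1000000

namespace Hirz

/-- Index type for the `(q+1)²` rational points of the Hirzebruch surface. -/
abbrev HIdx (F : Type) := (F × F) ⊕ F ⊕ F ⊕ Unit

variable (F : Type) [Field F] [Fintype F]

/-- The homogeneous coordinates of the rational points of `H_η`. -/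
def pt : HIdx F → Fin 4 → F
  | Sum.inl (a, b) => ![1, a, 1, b]
  | Sum.inr (Sum.inl b) => ![0, 1, 1, b]
  | Sum.inr (Sum.inr (Sum.inl a)) => ![1, a, 0, 1]
  | Sum.inr (Sum.inr (Sum.inr _)) => ![0, 1, 0, 1]

/-- Evaluation of a polynomial at all the rational points. -/
noncomputable def ev (P : MvPolynomial (Fin 4) F) : HIdx F → F :=
  fun i => eval (pt F i) P

/-- `c` is the exponent vector (T1,T2,X1,X2) of a monomial of bidegree `(δT, δX)`. -/
def IsBideg (η : ℕ) (δT : ℤ) (δX : ℕ) (c : Fin 4 → ℕ) : Prop :=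
  (c 0 : ℤ) + (c 1 : ℤ) - (η : ℤ) * (c 2 : ℤ) = δT ∧ c 2 + c 3 = δX

/-- The monomial with exponent vector `c`. -/
noncomputable def mon (c : Fin 4 → ℕ) : MvPolynomial (Fin 4) F :=
  monomial (Finsupp.equivFunOnFinite.symm c) (1 : F)

/-- The set of monomials of bidegree `(δT, δX)`. -/
def MSet (η : ℕ) (δT : ℤ) (δX : ℕ) : Set (MvPolynomial (Fin 4) F) :=
  {P | ∃ c : Fin 4 → ℕ, IsBideg η δT δX c ∧ P = mon F c}

/-- `R(δT,δX)`, the space of homogeneous polynomials of bidegree `(δT,δX)`. -/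
noncomputable def RSpan (η : ℕ) (δT : ℤ) (δX : ℕ) : Submodule F (MvPolynomial (Fin 4) F) :=
  Submodule.span F (MSet F η δT δX)

/-- The code `C_η(δT,δX)`, image of `R(δT,δX)` under evaluation. -/
noncomputable def Code (η : ℕ) (δT : ℤ) (δX : ℕ) : Submodule F (HIdx F → F) :=
  Submodule.span F (ev F '' MSet F η δT δX)

/-- Hamming weight. -/
noncomputable def wt (v : HIdx F → F) : ℕ := {i | v i ≠ 0}.ncard

/-- Minimum distance of `C_η(δT,δX)`. -/
noncomputable def dmin (η : ℕ) (δT : ℤ) (δX : ℕ) : ℕ :=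
  sInf {w : ℕ | ∃ v ∈ Code F η δT δX, v ≠ 0 ∧ wt F v = w}

/-- `⌊A⌋` where `A = δX` if `δT ≥ 0` and `A = δ/η` otherwise. -/
def Afloor (η : ℕ) (δT : ℤ) (δX : ℕ) : ℤ :=
  if 0 ≤ δT then (δX : ℤ) else (δT + (η : ℤ) * (δX : ℤ)) / (η : ℤ)

/-- Exponent vector of the monomial `M(d2,c2)`. -/
def Mexp (η : ℕ) (δT : ℤ) (δX : ℕ) (d2 c2 : ℕ) : Fin 4 → ℕ :=
  ![(δT + (η : ℤ) * ((δX : ℤ) - (d2 : ℤ)) - (c2 : ℤ)).toNat, c2, δX - d2, d2]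

/-- The monomial `M(d2,c2) = T1^(δT+η(δX-d2)-c2) T2^c2 X1^(δX-d2) X2^d2`. -/
noncomputable def Mmon (η : ℕ) (δT : ℤ) (δX : ℕ) (d2 c2 : ℕ) : MvPolynomial (Fin 4) F :=
  mon F (Mexp η δT δX d2 c2)

/-- The lattice polygon `P(δT,δX)`. -/
def PSet (η : ℕ) (δT : ℤ) (δX : ℕ) : Set (ℕ × ℕ) :=
  {p | (p.1 : ℤ) ≤ Afloor η δT δX ∧ (p.2 : ℤ) ≤ δT + (η : ℤ) * ((δX : ℤ) - (p.1 : ℤ))}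

/-- The set `A_X = {α : α ≤ min(⌊A⌋, q-1)} ∪ ({A} ∩ ℕ)`. -/
def AX (η : ℕ) (δT : ℤ) (δX : ℕ) (q : ℕ) : Set ℕ :=
  {α | (α : ℤ) ≤ min (Afloor η δT δX) ((q : ℤ) - 1)} ∪
    {α | if 0 ≤ δT then (α : ℤ) = (δX : ℤ)
         else (α : ℤ) * (η : ℤ) = δT + (η : ℤ) * (δX : ℤ)}

/-- The set of representatives `K(δT,δX)`. -/
def KSet (η : ℕ) (δT : ℤ) (δX : ℕ) (q : ℕ) : Set (ℕ × ℕ) :=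
  {p | p.1 ∈ AX η δT δX q ∧
    ((p.2 : ℤ) ≤ min (δT + (η : ℤ) * (δX : ℤ) - (η : ℤ) * (p.1 : ℤ)) (q : ℤ) - 1 ∨
      (p.2 : ℤ) = δT + (η : ℤ) * (δX : ℤ) - (η : ℤ) * (p.1 : ℤ))}

/-- Condition (H): `η ≥ 2`, `δT < 0`, `η ∣ δT` and `q ≤ δX + δT/η`. -/
def CondH (η : ℕ) (δT : ℤ) (δX : ℕ) (q : ℕ) : Prop :=
  2 ≤ η ∧ δT < 0 ∧ (η : ℤ) ∣ δT ∧ (q : ℤ) ≤ (δX : ℤ) + δT / (η : ℤ)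

/-- `K*(δT,δX)`: `K(δT,δX)` minus `(δ/η, 0)` if (H) holds. -/
def KStar (η : ℕ) (δT : ℤ) (δX : ℕ) (q : ℕ) : Set (ℕ × ℕ) :=
  if CondH η δT δX q then
    KSet η δT δX q \ {(((δT + (η : ℤ) * (δX : ℤ)) / (η : ℤ)).toNat, 0)}
  else KSet η δT δX q

/-- `Δ*(δT,δX) = {M(α,β) : (α,β) ∈ K*(δT,δX)}`. -/
noncomputable def DeltaStar (η : ℕ) (δT : ℤ) (δX : ℕ) (q : ℕ) :
    Set (MvPolynomial (Fin 4) F) :=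
  {P | ∃ p ∈ KStar η δT δX q, P = Mmon F η δT δX p.1 p.2}

/-! ## Auxiliary development -/

def Rj (η : ℕ) (δT : ℤ) (δX : ℕ) (j : ℕ) : ℤ := δT + (η : ℤ) * ((δX : ℤ) - (j : ℤ))

def nR (η : ℕ) (δT : ℤ) (δX : ℕ) (j : ℕ) : ℕ := (Rj η δT δX j).toNat

def cExp (η : ℕ) (δT : ℤ) (δX : ℕ) (j i : ℕ) : Fin 4 → ℕ :=
  ![nR η δT δX j - i, i, δX - j, j]

noncomputable def Gm (η : ℕ) (δT : ℤ) (δX : ℕ) (j i : ℕ) : MvPolynomial (Fin 4) F :=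
  if 0 ≤ Rj η δT δX j then mon F (cExp η δT δX j i) else 0

noncomputable def PLam (η : ℕ) (δT : ℤ) (δX : ℕ) (Λ : ℕ → ℕ → F) : MvPolynomial (Fin 4) F :=
  ∑ j ∈ Finset.range (δX+1), ∑ i ∈ Finset.range (nR η δT δX j + 1),
    Λ j i • Gm F η δT δX j i

def vL (η : ℕ) (δT : ℤ) (δX : ℕ) (Λ : ℕ → ℕ → F) : HIdx F → F
  | Sum.inl (a, b) => ∑ j ∈ Finset.range (δX+1), ∑ i ∈ Finset.range (nR η δT δX j + 1),
      (if 0 ≤ Rj η δT δX j then Λ j i else 0) * a^i * b^j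
  | Sum.inr (Sum.inl b) => ∑ j ∈ Finset.range (δX+1),
      (if 0 ≤ Rj η δT δX j then Λ j (nR η δT δX j) else 0) * b^j
  | Sum.inr (Sum.inr (Sum.inl a)) => ∑ i ∈ Finset.range (nR η δT δX δX + 1),
      (if 0 ≤ Rj η δT δX δX then Λ δX i else 0) * a^i
  | Sum.inr (Sum.inr (Sum.inr _)) => if 0 ≤ Rj η δT δX δX then Λ δX (nR η δT δX δX) else 0

lemma ev_mon (c : Fin 4 → ℕ) (x : HIdx F) :
    ev F (mon F c) x = ∏ k : Fin 4, (pt F x k) ^ (c k) := by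
  unfold ev mon
  rw [eval_monomial]
  rw [Finsupp.prod_fintype]
  · simp
  · intro i; exact pow_zero _

lemma ev_add (P Q : MvPolynomial (Fin 4) F) : ev F (P + Q) = ev F P + ev F Q := by
  funext x; simp [ev]

lemma ev_smul (r : F) (P : MvPolynomial (Fin 4) F) : ev F (r • P) = r • ev F P := by
  funext x; simp [ev, smul_eq_C_mul]

lemma ev_sum {α : Type*} (s : Finset α) (f : α → MvPolynomial (Fin 4) F) (x : HIdx F) :
    ev F (∑ a ∈ s, f a) x = ∑ a ∈ s, ev F (f a) x := by
  simp [ev]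

lemma Rj_nonneg_iff (η : ℕ) (δT : ℤ) (δX : ℕ) (j : ℕ) :
    0 ≤ Rj η δT δX j ↔ (η:ℤ) * j ≤ δT + η * δX := by
  unfold Rj; constructor <;> intro h <;> nlinarith

lemma ev_PLam (η : ℕ) (δT : ℤ) (δX : ℕ) (Λ : ℕ → ℕ → F) :
    ev F (PLam F η δT δX Λ) = vL F η δT δX Λ := by
  funext x
  unfold PLam
  rw [ev_sum]
  have hterm : ∀ j i, ev F (Λ j i • Gm F η δT δX j i) x
      = Λ j i * (if 0 ≤ Rj η δT δX j then ∏ k : Fin 4, (pt F x k) ^ (cExp η δT δX j i k) else 0) := by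
    intro j i
    rw [ev_smul]
    unfold Gm
    split_ifs with h
    · simp [ev_mon]
    · simp [ev]
  rcases x with ⟨a, b⟩ | b | a | u
  · show _ = ∑ j ∈ Finset.range (δX+1), ∑ i ∈ Finset.range (nR η δT δX j + 1),
      (if 0 ≤ Rj η δT δX j then Λ j i else 0) * a^i * b^j
    refine Finset.sum_congr rfl (fun j hj => ?_)
    rw [ev_sum]
    refine Finset.sum_congr rfl (fun i hi => ?_)
    rw [hterm]
    have : ∏ k : Fin 4, (pt F (Sum.inl (a,b)) k) ^ (cExp η δT δX j i k)
        = a^i * b^j := by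
      show (1:F)^(nR η δT δX j - i) * (a^i * ((1:F)^(δX - j) * (b^j * 1))) = _
      ring
    rw [this]
    split_ifs <;> ring
  · show _ = ∑ j ∈ Finset.range (δX+1),
      (if 0 ≤ Rj η δT δX j then Λ j (nR η δT δX j) else 0) * b^j
    refine Finset.sum_congr rfl (fun j hj => ?_)
    rw [ev_sum]
    rw [Finset.sum_eq_single (nR η δT δX j)]
    · rw [hterm]
      have : ∏ k : Fin 4, (pt F (Sum.inr (Sum.inl b)) k) ^ (cExp η δT δX j (nR η δT δX j) k)
          = b^j := by
        show (0:F)^(nR η δT δX j - nR η δT δX j) * ((1:F)^(nR η δT δX j) * ((1:F)^(δX - j) * (b^j * 1))) = _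
        simp
      rw [this]
      split_ifs <;> ring
    · intro i hi hne
      rw [hterm]
      have : ∏ k : Fin 4, (pt F (Sum.inr (Sum.inl b)) k) ^ (cExp η δT δX j i k) = 0 := by
        show (0:F)^(nR η δT δX j - i) * ((1:F)^i * ((1:F)^(δX - j) * (b^j * 1))) = 0
        rw [zero_pow]
        · ring
        · simp only [Finset.mem_range] at hi; omega
      rw [this]
      split_ifs <;> ring
    · intro h
      exact absurd (Finset.self_mem_range_succ _) h
  · show _ = ∑ i ∈ Finset.range (nR η δT δX δX + 1),
      (if 0 ≤ Rj η δT δX δX then Λ δX i else 0) * a^i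
    rw [Finset.sum_eq_single δX]
    · rw [ev_sum]
      refine Finset.sum_congr rfl (fun i hi => ?_)
      rw [hterm]
      have : ∏ k : Fin 4, (pt F (Sum.inr (Sum.inr (Sum.inl a))) k) ^ (cExp η δT δX δX i k)
          = a^i := by
        show (1:F)^(nR η δT δX δX - i) * (a^i * ((0:F)^(δX - δX) * ((1:F)^δX * 1))) = _
        simp
      rw [this]
      split_ifs <;> ring
    · intro j hj hne
      rw [ev_sum]
      refine Finset.sum_eq_zero (fun i hi => ?_)
      rw [hterm]
      have : ∏ k : Fin 4, (pt F (Sum.inr (Sum.inr (Sum.inl a))) k) ^ (cExp η δT δX j i k) = 0 := by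
        show (1:F)^(nR η δT δX j - i) * (a^i * ((0:F)^(δX - j) * ((1:F)^j * 1))) = 0
        rw [zero_pow]
        · ring
        · simp only [Finset.mem_range] at hj; omega
      rw [this]
      split_ifs <;> ring
    · intro h
      exact absurd (Finset.self_mem_range_succ _) h
  · show _ = if 0 ≤ Rj η δT δX δX then Λ δX (nR η δT δX δX) else 0
    rw [Finset.sum_eq_single δX]
    · rw [ev_sum]
      rw [Finset.sum_eq_single (nR η δT δX δX)]
      · rw [hterm]
        have : ∏ k : Fin 4, (pt F (Sum.inr (Sum.inr (Sum.inr u))) k) ^ (cExp η δT δX δX (nR η δT δX δX) k)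
            = 1 := by
          show (0:F)^(nR η δT δX δX - nR η δT δX δX) * ((1:F)^(nR η δT δX δX) * ((0:F)^(δX - δX) * ((1:F)^δX * 1))) = 1
          simp
        rw [this]
        split_ifs <;> ring
      · intro i hi hne
        rw [hterm]
        have : ∏ k : Fin 4, (pt F (Sum.inr (Sum.inr (Sum.inr u))) k) ^ (cExp η δT δX δX i k) = 0 := by
          show (0:F)^(nR η δT δX δX - i) * ((1:F)^i * ((0:F)^(δX - δX) * ((1:F)^δX * 1))) = 0
          rw [zero_pow]
          · ring
          · simp only [Finset.mem_range] at hi; omega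
        rw [this]
        split_ifs <;> ring
      · intro h
        exact absurd (Finset.self_mem_range_succ _) h
    · intro j hj hne
      rw [ev_sum]
      refine Finset.sum_eq_zero (fun i hi => ?_)
      rw [hterm]
      have : ∏ k : Fin 4, (pt F (Sum.inr (Sum.inr (Sum.inr u))) k) ^ (cExp η δT δX j i k) = 0 := by
        show (0:F)^(nR η δT δX j - i) * ((1:F)^i * ((0:F)^(δX - j) * ((1:F)^j * 1))) = 0
        have : (0:F)^(δX - j) = 0 := by
          rw [zero_pow]; simp only [Finset.mem_range] at hj; omega
        rw [this]; ring
      rw [this]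
      split_ifs <;> ring
    · intro h
      exact absurd (Finset.self_mem_range_succ _) h


lemma PLam_mem (η : ℕ) (δT : ℤ) (δX : ℕ) (Λ : ℕ → ℕ → F) :
    PLam F η δT δX Λ ∈ RSpan F η δT δX := by
  refine Submodule.sum_mem _ (fun j hj => Submodule.sum_mem _ (fun i hi => ?_))
  refine Submodule.smul_mem _ _ ?_
  unfold Gm
  split_ifs with h
  · refine Submodule.subset_span ⟨cExp η δT δX j i, ⟨?_, ?_⟩, rfl⟩
    · simp only [Finset.mem_range] at hj hi
      show ((nR η δT δX j - i : ℕ) : ℤ) + (i:ℤ) - (η:ℤ) * ((δX - j : ℕ):ℤ) = δT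
      have h1 : (i:ℤ) ≤ nR η δT δX j := by exact_mod_cast Nat.lt_succ_iff.mp hi
      have h2 : ((nR η δT δX j : ℕ) : ℤ) = Rj η δT δX j := Int.toNat_of_nonneg h
      have h3 : j ≤ δX := Nat.lt_succ_iff.mp hj
      have h4 : ((δX - j : ℕ) : ℤ) = (δX:ℤ) - j := by
        push_cast [Nat.cast_sub h3]; ring
      have h5 : ((nR η δT δX j - i : ℕ) : ℤ) = (nR η δT δX j : ℤ) - i := by
        push_cast [Nat.cast_sub (by exact_mod_cast h1 : i ≤ nR η δT δX j)]; ring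
      rw [h5, h4, h2]
      unfold Rj; ring
    · show (δX - j) + j = δX
      simp only [Finset.mem_range] at hj; omega
  · exact Submodule.zero_mem _

noncomputable def evLM (η : ℕ) (δT : ℤ) (δX : ℕ) : MvPolynomial (Fin 4) F →ₗ[F] (HIdx F → F) where
  toFun P := ev F P
  map_add' P Q := ev_add F P Q
  map_smul' r P := by show ev F (r • P) = r • ev F P; rw [ev_smul]

lemma ev_mem_code (η : ℕ) (δT : ℤ) (δX : ℕ) (P : MvPolynomial (Fin 4) F)
    (hP : P ∈ RSpan F η δT δX) : ev F P ∈ Code F η δT δX := by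
  have : ev F P = evLM F η δT δX P := rfl
  rw [this]
  have h2 : Code F η δT δX = Submodule.map (evLM F η δT δX) (RSpan F η δT δX) := by
    unfold Code RSpan
    rw [Submodule.map_span]
    rfl
  rw [h2]
  exact Submodule.mem_map_of_mem hP

lemma PLam_add (η : ℕ) (δT : ℤ) (δX : ℕ) (Λ1 Λ2 : ℕ → ℕ → F) :
    PLam F η δT δX (Λ1 + Λ2) = PLam F η δT δX Λ1 + PLam F η δT δX Λ2 := by
  unfold PLam
  rw [← Finset.sum_add_distrib]
  refine Finset.sum_congr rfl (fun j hj => ?_)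
  rw [← Finset.sum_add_distrib]
  refine Finset.sum_congr rfl (fun i hi => ?_)
  show ((Λ1 + Λ2) j i) • _ = _
  have : (Λ1 + Λ2) j i = Λ1 j i + Λ2 j i := rfl
  rw [this, add_smul]

lemma PLam_smul (η : ℕ) (δT : ℤ) (δX : ℕ) (r : F) (Λ : ℕ → ℕ → F) :
    PLam F η δT δX (r • Λ) = r • PLam F η δT δX Λ := by
  unfold PLam
  rw [Finset.smul_sum]
  refine Finset.sum_congr rfl (fun j hj => ?_)
  rw [Finset.smul_sum]
  refine Finset.sum_congr rfl (fun i hi => ?_)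
  show ((r • Λ) j i) • _ = _
  have : (r • Λ) j i = r * Λ j i := rfl
  rw [this, mul_smul]

noncomputable def LM (η : ℕ) (δT : ℤ) (δX : ℕ) : (ℕ → ℕ → F) →ₗ[F] (HIdx F → F) where
  toFun Λ := ev F (PLam F η δT δX Λ)
  map_add' Λ1 Λ2 := by
    show ev F (PLam F η δT δX (Λ1 + Λ2)) = _
    rw [PLam_add, ev_add]
  map_smul' r Λ := by
    show ev F (PLam F η δT δX (r • Λ)) = _
    rw [PLam_smul, ev_smul]
    rfl

lemma mon_eq_PLam (η : ℕ) (δT : ℤ) (δX : ℕ) (c : Fin 4 → ℕ) (hc : IsBideg η δT δX c) :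
    mon F c = PLam F η δT δX (fun j i => if j = c 3 ∧ i = c 1 then (1:F) else 0) := by
  unfold PLam
  have hc3 : c 2 + c 3 = δX := hc.2
  have hRj : Rj η δT δX (c 3) = (c 0 : ℤ) + (c 1 : ℤ) := by
    unfold Rj
    have h : ((δX:ℤ) - (c 3 : ℤ)) = (c 2 : ℤ) := by
      push_cast [← hc.2]; ring
    rw [h, ← hc.1]; ring
  have hR0 : 0 ≤ Rj η δT δX (c 3) := by rw [hRj]; omega
  have hnR : nR η δT δX (c 3) = c 0 + c 1 := by unfold nR; rw [hRj]; omega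
  rw [Finset.sum_eq_single (c 3)]
  · rw [Finset.sum_eq_single (c 1)]
    · beta_reduce
      rw [if_pos ⟨rfl, rfl⟩, one_smul]
      unfold Gm
      rw [if_pos hR0]
      congr 1
      funext k
      fin_cases k
      · show c 0 = nR η δT δX (c 3) - c 1
        omega
      · rfl
      · show c 2 = δX - c 3
        omega
      · rfl
    · intro i hi hne
      beta_reduce
      rw [if_neg (by tauto), zero_smul]
    · intro h
      exfalso; apply h
      rw [Finset.mem_range, hnR]; omega
  · intro j hj hne
    refine Finset.sum_eq_zero (fun i hi => ?_)
    beta_reduce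
    rw [if_neg (by tauto), zero_smul]
  · intro h
    exfalso; apply h
    rw [Finset.mem_range]; omega

lemma code_rep (η : ℕ) (δT : ℤ) (δX : ℕ) (v : HIdx F → F)
    (hv : v ∈ Code F η δT δX) : ∃ Λ : ℕ → ℕ → F, v = vL F η δT δX Λ := by
  have hle : Code F η δT δX ≤ LinearMap.range (LM F η δT δX) := by
    refine Submodule.span_le.mpr ?_
    rintro - ⟨-, ⟨c, hc, rfl⟩, rfl⟩
    refine ⟨(fun j i => if j = c 3 ∧ i = c 1 then (1:F) else 0), ?_⟩
    show ev F (PLam F η δT δX _) = ev F (mon F c)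
    rw [mon_eq_PLam F η δT δX c hc]
  obtain ⟨Λ, hΛ⟩ := hle hv
  refine ⟨Λ, ?_⟩
  rw [← hΛ]
  have h2 : (LM F η δT δX) Λ = ev F (PLam F η δT δX Λ) := rfl
  rw [h2, ev_PLam]

/-! ## Counting helpers -/

lemma card_filter_sum {α β : Type} [Fintype α] [Fintype β] (p : α ⊕ β → Prop)
    [DecidablePred p] [DecidablePred (fun a => p (Sum.inl a))]
    [DecidablePred (fun b => p (Sum.inr b))] :
    (Finset.univ.filter p).card
      = (Finset.univ.filter (fun a => p (Sum.inl a))).card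
        + (Finset.univ.filter (fun b => p (Sum.inr b))).card := by
  rw [← Fintype.card_subtype, ← Fintype.card_subtype, ← Fintype.card_subtype]
  rw [Fintype.card_congr (Equiv.subtypeSum (p := p))]
  rw [Fintype.card_sum]

lemma card_filter_unit (p : Unit → Prop) [DecidablePred p] :
    (Finset.univ.filter p).card = if p () then 1 else 0 := by
  rw [Finset.card_filter]
  rw [Fintype.sum_unique]

lemma card_filter_prod {α β : Type} [Fintype α] [Fintype β] (p : α × β → Prop)
    [DecidablePred p] [∀ a, DecidablePred (fun b => p (a, b))] :
    (Finset.univ.filter p).card = ∑ a : α, (Finset.univ.filter (fun b => p (a, b))).card := by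
  rw [Finset.card_filter]
  rw [Fintype.sum_prod_type]
  refine Finset.sum_congr rfl (fun a _ => ?_)
  rw [Finset.card_filter]

lemma wt_eq (v : HIdx F → F) :
    wt F v = (Finset.univ.filter (fun ab : F × F => v (Sum.inl ab) ≠ 0)).card
      + ((Finset.univ.filter (fun b : F => v (Sum.inr (Sum.inl b)) ≠ 0)).card
        + ((Finset.univ.filter (fun a : F => v (Sum.inr (Sum.inr (Sum.inl a))) ≠ 0)).card
          + (if v (Sum.inr (Sum.inr (Sum.inr ()))) ≠ 0 then 1 else 0))) := by
  unfold wt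
  rw [Set.ncard_eq_toFinset_card']
  rw [Set.toFinset_setOf]
  rw [card_filter_sum]
  congr 1
  rw [card_filter_sum]
  congr 1
  rw [card_filter_sum]
  congr 1
  rw [card_filter_unit]

lemma card_eval_ne_zero (u : Polynomial F) (hu : u ≠ 0) :
    Fintype.card F - u.natDegree
      ≤ (Finset.univ.filter (fun x : F => Polynomial.eval x u ≠ 0)).card := by
  have h1 : (Finset.univ.filter (fun x : F => Polynomial.eval x u = 0)).card ≤ u.natDegree := by
    have hsub : (Finset.univ.filter (fun x : F => Polynomial.eval x u = 0)) ⊆ u.roots.toFinset := by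
      intro x hx
      rw [Multiset.mem_toFinset]
      exact Polynomial.mem_roots'.mpr ⟨hu, (Finset.mem_filter.mp hx).2⟩
    calc _ ≤ u.roots.toFinset.card := Finset.card_le_card hsub
      _ ≤ Multiset.card u.roots := Multiset.toFinset_card_le _
      _ ≤ u.natDegree := Polynomial.card_roots' u
  have h2 : (Finset.univ.filter (fun x : F => Polynomial.eval x u ≠ 0))
      = Finset.univ \ (Finset.univ.filter (fun x : F => Polynomial.eval x u = 0)) := by
    ext x
    simp
  have h3 : (Finset.univ.filter (fun x : F => Polynomial.eval x u = 0)) ⊆ Finset.univ :=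
    Finset.filter_subset _ _
  rw [h2, Finset.card_sdiff_of_subset h3, Finset.card_univ]
  omega

/-! ## Univariate reduction machinery -/

noncomputable def sumCX (c : ℕ → F) (N : ℕ) : Polynomial F :=
  ∑ j ∈ Finset.range N, Polynomial.C (c j) * Polynomial.X ^ j

lemma coeff_sumCX (c : ℕ → F) (N n : ℕ) :
    (sumCX F c N).coeff n = if n < N then c n else 0 := by
  unfold sumCX
  rw [Polynomial.finset_sum_coeff]
  by_cases h : n < N
  · rw [Finset.sum_eq_single n]
    · simp [h]
    · intro j hj hne
      simp [Polynomial.coeff_C_mul, Polynomial.coeff_X_pow, (Ne.symm hne : ¬ n = j)]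
    · intro hn
      exact absurd (Finset.mem_range.mpr h) hn
  · rw [if_neg h]
    refine Finset.sum_eq_zero (fun j hj => ?_)
    rw [Finset.mem_range] at hj
    have : ¬ n = j := by omega
    simp [Polynomial.coeff_C_mul, Polynomial.coeff_X_pow, this]

lemma natDegree_sumCX (c : ℕ → F) (N : ℕ) (k : ℕ) (hk : N ≤ k + 1) :
    (sumCX F c N).natDegree ≤ k := by
  rw [Polynomial.natDegree_le_iff_coeff_eq_zero]
  intro n hn
  rw [coeff_sumCX, if_neg (by omega)]

lemma eval_sumCX (c : ℕ → F) (N : ℕ) (b : F) :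
    Polynomial.eval b (sumCX F c N) = ∑ j ∈ Finset.range N, c j * b ^ j := by
  unfold sumCX
  rw [Polynomial.eval_finset_sum]
  simp

lemma sumCX_ne_zero_of_coeff (c : ℕ → F) (N n : ℕ) (hn : n < N) (hc : c n ≠ 0) :
    sumCX F c N ≠ 0 := by
  intro h
  have := coeff_sumCX F c N n
  rw [h, if_pos hn] at this
  exact hc (by simpa using this.symm)

noncomputable def gam (η : ℕ) (δT : ℤ) (δX : ℕ) (Λ : ℕ → ℕ → F) (j : ℕ) : Polynomial F :=
  if j ≤ δX ∧ 0 ≤ Rj η δT δX j then sumCX F (Λ j) (nR η δT δX j + 1) else 0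

noncomputable def Tc (η : ℕ) (δT : ℤ) (δX : ℕ) (Λ : ℕ → ℕ → F) (j : ℕ) : F :=
  (gam F η δT δX Λ j).coeff (nR η δT δX j)

noncomputable def Gb (η : ℕ) (δT : ℤ) (δX : ℕ) (Λ : ℕ → ℕ → F) (j' : ℕ) : Polynomial F :=
  gam F η δT δX Λ j' + if 1 ≤ j' then gam F η δT δX Λ (j' + (Fintype.card F - 1)) else 0

noncomputable def Tcb (η : ℕ) (δT : ℤ) (δX : ℕ) (Λ : ℕ → ℕ → F) (j' : ℕ) : F :=
  Tc F η δT δX Λ j' + if 1 ≤ j' then Tc F η δT δX Λ (j' + (Fintype.card F - 1)) else 0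

noncomputable def pA (η : ℕ) (δT : ℤ) (δX : ℕ) (Λ : ℕ → ℕ → F) (a : F) : Polynomial F :=
  sumCX F (fun j' => Polynomial.eval a (Gb F η δT δX Λ j')) (Fintype.card F)

noncomputable def gbar (η : ℕ) (δT : ℤ) (δX : ℕ) (Λ : ℕ → ℕ → F) : Polynomial F :=
  sumCX F (Tcb F η δT δX Λ) (Fintype.card F)

lemma gam_ne_imp (η : ℕ) (δT : ℤ) (δX : ℕ) (Λ : ℕ → ℕ → F) (j : ℕ)
    (h : gam F η δT δX Λ j ≠ 0) : j ≤ δX ∧ 0 ≤ Rj η δT δX j := by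
  unfold gam at h
  split_ifs at h with hg
  · exact hg
  · exact absurd rfl h

lemma gam_natDegree (η : ℕ) (δT : ℤ) (δX : ℕ) (Λ : ℕ → ℕ → F) (j : ℕ) :
    (gam F η δT δX Λ j).natDegree ≤ nR η δT δX j := by
  unfold gam
  split_ifs with hg
  · exact natDegree_sumCX F _ _ _ (le_refl _)
  · simp

lemma Tc_eq (η : ℕ) (δT : ℤ) (δX : ℕ) (Λ : ℕ → ℕ → F) (j : ℕ) :
    Tc F η δT δX Λ j = if j ≤ δX ∧ 0 ≤ Rj η δT δX j then Λ j (nR η δT δX j) else 0 := by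
  unfold Tc gam
  split_ifs with hg
  · rw [coeff_sumCX, if_pos (Nat.lt_succ_self _)]
  · simp

lemma vLa (η : ℕ) (δT : ℤ) (δX : ℕ) (Λ : ℕ → ℕ → F) (a b : F) :
    vL F η δT δX Λ (Sum.inl (a, b))
      = ∑ j ∈ Finset.range (δX+1), Polynomial.eval a (gam F η δT δX Λ j) * b^j := by
  show (∑ j ∈ Finset.range (δX+1), ∑ i ∈ Finset.range (nR η δT δX j + 1),
      (if 0 ≤ Rj η δT δX j then Λ j i else 0) * a^i * b^j) = _
  refine Finset.sum_congr rfl (fun j hj => ?_)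
  rw [Finset.mem_range] at hj
  have hj' : j ≤ δX := by omega
  by_cases hg : 0 ≤ Rj η δT δX j
  · unfold gam
    rw [if_pos ⟨hj', hg⟩, eval_sumCX, Finset.sum_mul]
    refine Finset.sum_congr rfl (fun i hi => ?_)
    rw [if_pos hg]
  · unfold gam
    rw [if_neg (by tauto), Polynomial.eval_zero, zero_mul]
    refine Finset.sum_eq_zero (fun i hi => ?_)
    rw [if_neg hg]; ring

lemma vLg (η : ℕ) (δT : ℤ) (δX : ℕ) (Λ : ℕ → ℕ → F) (b : F) :
    vL F η δT δX Λ (Sum.inr (Sum.inl b))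
      = ∑ j ∈ Finset.range (δX+1), Tc F η δT δX Λ j * b^j := by
  show (∑ j ∈ Finset.range (δX+1),
      (if 0 ≤ Rj η δT δX j then Λ j (nR η δT δX j) else 0) * b^j) = _
  refine Finset.sum_congr rfl (fun j hj => ?_)
  rw [Finset.mem_range] at hj
  have hj' : j ≤ δX := by omega
  rw [Tc_eq]
  by_cases hg : 0 ≤ Rj η δT δX j
  · rw [if_pos hg, if_pos ⟨hj', hg⟩]
  · rw [if_neg hg, if_neg (by tauto)]

lemma vLh (η : ℕ) (δT : ℤ) (δX : ℕ) (Λ : ℕ → ℕ → F) (a : F) :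
    vL F η δT δX Λ (Sum.inr (Sum.inr (Sum.inl a)))
      = Polynomial.eval a (gam F η δT δX Λ δX) := by
  show (∑ i ∈ Finset.range (nR η δT δX δX + 1),
      (if 0 ≤ Rj η δT δX δX then Λ δX i else 0) * a^i) = _
  by_cases hg : 0 ≤ Rj η δT δX δX
  · unfold gam
    rw [if_pos ⟨le_refl _, hg⟩, eval_sumCX]
    refine Finset.sum_congr rfl (fun i hi => ?_)
    rw [if_pos hg]
  · unfold gam
    rw [if_neg (by tauto), Polynomial.eval_zero]
    refine Finset.sum_eq_zero (fun i hi => ?_)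
    rw [if_neg hg]; ring

lemma vLc (η : ℕ) (δT : ℤ) (δX : ℕ) (Λ : ℕ → ℕ → F) (u : Unit) :
    vL F η δT δX Λ (Sum.inr (Sum.inr (Sum.inr u))) = Tc F η δT δX Λ δX := by
  show (if 0 ≤ Rj η δT δX δX then Λ δX (nR η δT δX δX) else 0) = _
  rw [Tc_eq]
  by_cases hg : 0 ≤ Rj η δT δX δX
  · rw [if_pos hg, if_pos ⟨le_refl _, hg⟩]
  · rw [if_neg hg, if_neg (by tauto)]

lemma pow_red (hq1 : 1 ≤ Fintype.card F) (b : F) (k : ℕ) (hk : 1 ≤ k) :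
    b^(k + (Fintype.card F - 1)) = b^k := by
  by_cases hb : b = 0
  · subst hb
    rw [zero_pow (by omega), zero_pow (by omega)]
  · rw [pow_add, FiniteField.pow_card_sub_one_eq_one b hb, mul_one]

lemma sum_reduce (δX : ℕ) (hq2 : 2 ≤ Fintype.card F) (c : ℕ → F)
    (hc : ∀ j, (δX < j ∨ 2*Fintype.card F - 2 < j) → c j = 0) (b : F) :
    ∑ j ∈ Finset.range (δX+1), c j * b^j
      = ∑ j' ∈ Finset.range (Fintype.card F),
          (c j' + if 1 ≤ j' then c (j' + (Fintype.card F - 1)) else 0) * b^j' := by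
  set q := Fintype.card F with hq
  have e1 : ∑ j ∈ Finset.range (δX+1), c j * b^j = ∑ j ∈ Finset.range (2*q-1), c j * b^j := by
    rcases le_total (δX+1) (2*q-1) with h | h
    · refine Finset.sum_subset (Finset.range_subset_range.mpr h) (fun j hj hnj => ?_)
      rw [Finset.mem_range] at hj hnj
      rw [hc j (by omega), zero_mul]
    · refine (Finset.sum_subset (Finset.range_subset_range.mpr h) (fun j hj hnj => ?_)).symm
      rw [Finset.mem_range] at hj hnj
      rw [hc j (by omega), zero_mul]
  rw [e1]
  have e5 : ∑ j ∈ Finset.range (2*q-1), c j * b^j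
      = (∑ j ∈ Finset.range q, c j * b^j) + ∑ j ∈ Finset.Ico q (2*q-1), c j * b^j := by
    simp only [Finset.range_eq_Ico]
    rw [← Finset.sum_Ico_consecutive _ (by omega : 0 ≤ q) (by omega : q ≤ 2*q-1)]
  have e4 : ∑ j ∈ Finset.Ico q (2*q-1), c j * b^j
      = ∑ j' ∈ Finset.Ico 1 q, c (j' + (q-1)) * b^j' := by
    rw [Finset.sum_Ico_eq_sum_range, Finset.sum_Ico_eq_sum_range]
    have hcard : 2*q-1-q = q - 1 := by omega
    rw [hcard]
    refine Finset.sum_congr rfl (fun k hk => ?_)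
    have h1 : 1 + k + (q-1) = q + k := by omega
    have h2 : q + k = (1+k) + (q-1) := by omega
    rw [h1, h2, pow_red F (by omega) b (1+k) (by omega)]
  have e3 : ∑ j' ∈ Finset.Ico 1 q, c (j' + (q-1)) * b^j'
      = ∑ j' ∈ Finset.range q, (if 1 ≤ j' then c (j' + (q-1)) else 0) * b^j' := by
    have hfil : Finset.Ico 1 q = (Finset.range q).filter (fun j' => 1 ≤ j') := by
      ext x
      simp only [Finset.mem_Ico, Finset.mem_range, Finset.mem_filter]
      omega
    rw [hfil, Finset.sum_filter]
    refine Finset.sum_congr rfl (fun j' hj' => ?_)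
    split_ifs <;> ring
  rw [e5, e4, e3, ← Finset.sum_add_distrib]
  refine Finset.sum_congr rfl (fun j' hj' => ?_)
  ring

lemma j_le (η : ℕ) (δT : ℤ) (δX : ℕ) (Λ : ℕ → ℕ → F) (hη : 2 ≤ η)
    (hq2 : 2 ≤ Fintype.card F)
    (hδlt : δT + (η:ℤ)*δX < ((η:ℤ)+1) * Fintype.card F) (j : ℕ)
    (h : gam F η δT δX Λ j ≠ 0) : j ≤ δX ∧ j ≤ 2*Fintype.card F - 2 := by
  obtain ⟨h1, h2⟩ := gam_ne_imp F η δT δX Λ j h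
  refine ⟨h1, ?_⟩
  rw [Rj_nonneg_iff] at h2
  by_contra hcon
  push_neg at hcon
  have hj' : (2*(Fintype.card F:ℤ) - 1) ≤ (j:ℤ) := by omega
  have hη' : (2:ℤ) ≤ η := by exact_mod_cast hη
  have hq' : (2:ℤ) ≤ Fintype.card F := by exact_mod_cast hq2
  nlinarith [mul_le_mul_of_nonneg_left hj' (by positivity : (0:ℤ) ≤ (η:ℤ))]

lemma pA_eval (η : ℕ) (δT : ℤ) (δX : ℕ) (Λ : ℕ → ℕ → F) (hη : 2 ≤ η)
    (hq2 : 2 ≤ Fintype.card F)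
    (hδlt : δT + (η:ℤ)*δX < ((η:ℤ)+1) * Fintype.card F) (a b : F) :
    vL F η δT δX Λ (Sum.inl (a, b)) = Polynomial.eval b (pA F η δT δX Λ a) := by
  rw [vLa]
  rw [sum_reduce F δX hq2 (fun j => Polynomial.eval a (gam F η δT δX Λ j))
    (fun j hj => by
      have : gam F η δT δX Λ j = 0 := by
        by_contra hne
        have := j_le F η δT δX Λ hη hq2 hδlt j hne
        omega
      simp only [this, Polynomial.eval_zero]) b]
  unfold pA
  rw [eval_sumCX]
  refine Finset.sum_congr rfl (fun j' hj' => ?_)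
  congr 1
  unfold Gb
  rw [Polynomial.eval_add]
  congr 1
  split_ifs
  · rfl
  · rw [Polynomial.eval_zero]

lemma gbar_eval (η : ℕ) (δT : ℤ) (δX : ℕ) (Λ : ℕ → ℕ → F) (hη : 2 ≤ η)
    (hq2 : 2 ≤ Fintype.card F)
    (hδlt : δT + (η:ℤ)*δX < ((η:ℤ)+1) * Fintype.card F) (b : F) :
    vL F η δT δX Λ (Sum.inr (Sum.inl b)) = Polynomial.eval b (gbar F η δT δX Λ) := by
  rw [vLg]
  rw [sum_reduce F δX hq2 (Tc F η δT δX Λ)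
    (fun j hj => by
      have : gam F η δT δX Λ j = 0 := by
        by_contra hne
        have := j_le F η δT δX Λ hη hq2 hδlt j hne
        omega
      unfold Tc
      rw [this, Polynomial.coeff_zero]) b]
  unfold gbar
  rw [eval_sumCX]
  unfold Tcb
  rfl

lemma Rj_eq (η : ℕ) (δT : ℤ) (δX : ℕ) (j : ℕ) :
    Rj η δT δX j = δT + (η:ℤ)*δX - (η:ℤ)*j := by
  unfold Rj; ring

lemma Rj_anti (η : ℕ) (δT : ℤ) (δX : ℕ) (j k : ℕ) (h : j ≤ k) :
    Rj η δT δX k ≤ Rj η δT δX j := by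
  rw [Rj_eq, Rj_eq]
  have : (η:ℤ)*j ≤ (η:ℤ)*k := by
    refine mul_le_mul_of_nonneg_left ?_ (by positivity)
    exact_mod_cast h
  linarith

lemma card_le_natDegree_of_roots (u : Polynomial F) (hu : u ≠ 0) (s : Finset F)
    (h : ∀ a ∈ s, Polynomial.eval a u = 0) : s.card ≤ u.natDegree := by
  have hsub : s ⊆ u.roots.toFinset := by
    intro x hx
    rw [Multiset.mem_toFinset]
    exact Polynomial.mem_roots'.mpr ⟨hu, h x hx⟩
  calc s.card ≤ u.roots.toFinset.card := Finset.card_le_card hsub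
    _ ≤ Multiset.card u.roots := Multiset.toFinset_card_le _
    _ ≤ u.natDegree := Polynomial.card_roots' u

lemma Tc_ne_imp (η : ℕ) (δT : ℤ) (δX : ℕ) (Λ : ℕ → ℕ → F) (j : ℕ)
    (h : Tc F η δT δX Λ j ≠ 0) : gam F η δT δX Λ j ≠ 0 := by
  intro h0
  unfold Tc at h
  rw [h0, Polynomial.coeff_zero] at h
  exact h rfl

lemma Gb_ne_imp (η : ℕ) (δT : ℤ) (δX : ℕ) (Λ : ℕ → ℕ → F) (hq2 : 2 ≤ Fintype.card F)
    (j' : ℕ) (h : Gb F η δT δX Λ j' ≠ 0) :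
    0 ≤ Rj η δT δX j' ∧ (Gb F η δT δX Λ j').natDegree ≤ nR η δT δX j' := by
  have hR : 0 ≤ Rj η δT δX j' := by
    by_cases hg : gam F η δT δX Λ j' ≠ 0
    · exact (gam_ne_imp F η δT δX Λ j' hg).2
    · push_neg at hg
      unfold Gb at h
      rw [hg, zero_add] at h
      split_ifs at h with h1
      · have := (gam_ne_imp F η δT δX Λ _ h).2
        calc (0:ℤ) ≤ Rj η δT δX (j' + (Fintype.card F - 1)) := this
          _ ≤ Rj η δT δX j' := Rj_anti η δT δX _ _ (by omega)
      · exact absurd rfl h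
  refine ⟨hR, ?_⟩
  unfold Gb
  refine le_trans (Polynomial.natDegree_add_le _ _) (max_le (gam_natDegree F η δT δX Λ j') ?_)
  split_ifs with h1
  · refine le_trans (gam_natDegree F η δT δX Λ _) ?_
    unfold nR
    exact Int.toNat_le_toNat (Rj_anti η δT δX _ _ (by omega))
  · simp

lemma Gb_coeff_top (η : ℕ) (δT : ℤ) (δX : ℕ) (Λ : ℕ → ℕ → F) (hη : 1 ≤ η)
    (hq2 : 2 ≤ Fintype.card F) (j' : ℕ) (hR : 0 ≤ Rj η δT δX j') :
    (Gb F η δT δX Λ j').coeff (nR η δT δX j') = Tc F η δT δX Λ j' := by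
  unfold Gb
  rw [Polynomial.coeff_add]
  have h2 : (if 1 ≤ j' then gam F η δT δX Λ (j' + (Fintype.card F - 1)) else 0).coeff
      (nR η δT δX j') = 0 := by
    split_ifs with h1
    · by_cases hg : gam F η δT δX Λ (j' + (Fintype.card F - 1)) = 0
      · rw [hg, Polynomial.coeff_zero]
      · refine Polynomial.coeff_eq_zero_of_natDegree_lt ?_
        refine lt_of_le_of_lt (gam_natDegree F η δT δX Λ _) ?_
        have hR2 : 0 ≤ Rj η δT δX (j' + (Fintype.card F - 1)) :=
          (gam_ne_imp F η δT δX Λ _ hg).2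
        have hstrict : Rj η δT δX (j' + (Fintype.card F - 1)) < Rj η δT δX j' := by
          rw [Rj_eq, Rj_eq]
          have hc : ((j' + (Fintype.card F - 1) : ℕ) : ℤ) = (j':ℤ) + (Fintype.card F - 1 : ℕ) := by
            push_cast; ring
          have hpos : (1:ℤ) ≤ ((Fintype.card F - 1 : ℕ) : ℤ) := by
            have : 1 ≤ Fintype.card F - 1 := by omega
            exact_mod_cast this
          have hη' : (1:ℤ) ≤ (η:ℤ) := by exact_mod_cast hη
          rw [hc]
          nlinarith
        unfold nR
        omega
    · rw [Polynomial.coeff_zero]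
  rw [h2, add_zero]
  rfl

lemma C1 (η : ℕ) (δT : ℤ) (δX : ℕ) (Λ : ℕ → ℕ → F) (hq2 : 2 ≤ Fintype.card F)
    (j' : ℕ) (hj' : j' < Fintype.card F) (hGb : Gb F η δT δX Λ j' ≠ 0) :
    ((Finset.univ.filter (fun a : F => pA F η δT δX Λ a = 0)).card : ℤ)
      ≤ Rj η δT δX j' := by
  obtain ⟨hR, hdeg⟩ := Gb_ne_imp F η δT δX Λ hq2 j' hGb
  have hroots : ∀ a ∈ Finset.univ.filter (fun a : F => pA F η δT δX Λ a = 0),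
      Polynomial.eval a (Gb F η δT δX Λ j') = 0 := by
    intro a ha
    have hpa : pA F η δT δX Λ a = 0 := (Finset.mem_filter.mp ha).2
    have := coeff_sumCX F (fun k => Polynomial.eval a (Gb F η δT δX Λ k)) (Fintype.card F) j'
    rw [if_pos hj'] at this
    have h0 : (pA F η δT δX Λ a).coeff j' = Polynomial.eval a (Gb F η δT δX Λ j') := this
    rw [hpa, Polynomial.coeff_zero] at h0
    exact h0.symm
  have hcard := card_le_natDegree_of_roots F _ hGb _ hroots
  have : ((Finset.univ.filter (fun a : F => pA F η δT δX Λ a = 0)).card : ℤ)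
      ≤ (nR η δT δX j' : ℤ) := by
    exact_mod_cast le_trans hcard hdeg
  rwa [show ((nR η δT δX j' : ℕ) : ℤ) = Rj η δT δX j' from Int.toNat_of_nonneg hR] at this

lemma C2 (η : ℕ) (δT : ℤ) (δX : ℕ) (Λ : ℕ → ℕ → F) (hη : 2 ≤ η)
    (hq2 : 2 ≤ Fintype.card F)
    (hgbar : gbar F η δT δX Λ = 0)
    (hz1 : (Finset.univ.filter (fun a : F => pA F η δT δX Λ a = 0)).card ≤ Fintype.card F - 1)
    (j' : ℕ) (hj' : j' < Fintype.card F) (hGb : Gb F η δT δX Λ j' ≠ 0) :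
    ((Finset.univ.filter (fun a : F => pA F η δT δX Λ a = 0)).card : ℤ) + 1
      ≤ Rj η δT δX j' := by
  obtain ⟨hR, hdeg⟩ := Gb_ne_imp F η δT δX Λ hq2 j' hGb
  by_cases hTc : Tc F η δT δX Λ j' = 0
  · have htop : (Gb F η δT δX Λ j').coeff (nR η δT δX j') = 0 := by
      rw [Gb_coeff_top F η δT δX Λ (by omega) hq2 j' hR]; exact hTc
    have hne : (Gb F η δT δX Λ j').natDegree ≠ nR η δT δX j' := by
      intro he
      apply hGb
      refine Polynomial.leadingCoeff_eq_zero.mp ?_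
      rw [Polynomial.leadingCoeff, he]
      exact htop
    have hroots : ∀ a ∈ Finset.univ.filter (fun a : F => pA F η δT δX Λ a = 0),
        Polynomial.eval a (Gb F η δT δX Λ j') = 0 := by
      intro a ha
      have hpa : pA F η δT δX Λ a = 0 := (Finset.mem_filter.mp ha).2
      have := coeff_sumCX F (fun k => Polynomial.eval a (Gb F η δT δX Λ k)) (Fintype.card F) j'
      rw [if_pos hj'] at this
      have h0 : (pA F η δT δX Λ a).coeff j' = Polynomial.eval a (Gb F η δT δX Λ j') := this
      rw [hpa, Polynomial.coeff_zero] at h0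
      exact h0.symm
    have hcard := card_le_natDegree_of_roots F _ hGb _ hroots
    have h3 : (Finset.univ.filter (fun a : F => pA F η δT δX Λ a = 0)).card + 1 ≤ nR η δT δX j' := by
      omega
    have h4 : ((Finset.univ.filter (fun a : F => pA F η δT δX Λ a = 0)).card : ℤ) + 1
        ≤ (nR η δT δX j' : ℤ) := by exact_mod_cast h3
    rwa [show ((nR η δT δX j' : ℕ) : ℤ) = Rj η δT δX j' from Int.toNat_of_nonneg hR] at h4
  · have hTcb : Tcb F η δT δX Λ j' = 0 := by
      have h0 : (gbar F η δT δX Λ).coeff j' = Tcb F η δT δX Λ j' := by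
        have := coeff_sumCX F (Tcb F η δT δX Λ) (Fintype.card F) j'
        rwa [if_pos hj'] at this
      rw [hgbar, Polynomial.coeff_zero] at h0
      exact h0.symm
    by_cases h1 : 1 ≤ j'
    · have h2 : Tc F η δT δX Λ (j' + (Fintype.card F - 1)) ≠ 0 := by
        unfold Tcb at hTcb
        rw [if_pos h1] at hTcb
        intro hzero
        rw [hzero, add_zero] at hTcb
        exact hTc hTcb
      have hg2 : gam F η δT δX Λ (j' + (Fintype.card F - 1)) ≠ 0 := Tc_ne_imp F η δT δX Λ _ h2
      have hR2 : 0 ≤ Rj η δT δX (j' + (Fintype.card F - 1)) := (gam_ne_imp F η δT δX Λ _ hg2).2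
      have key : (2:ℤ)*((Fintype.card F:ℤ) - 1) ≤ Rj η δT δX j' := by
        rw [Rj_eq] at hR2 ⊢
        have hc : ((j' + (Fintype.card F - 1) : ℕ) : ℤ) = (j':ℤ) + ((Fintype.card F:ℤ) - 1) := by
          omega
        rw [hc] at hR2
        have hη' : (2:ℤ) ≤ η := by exact_mod_cast hη
        have hq' : (2:ℤ) ≤ (Fintype.card F:ℤ) := by exact_mod_cast hq2
        nlinarith
      have hz1' : ((Finset.univ.filter (fun a : F => pA F η δT δX Λ a = 0)).card : ℤ)
          ≤ (Fintype.card F:ℤ) - 1 := by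
        have := hz1; omega
      linarith
    · unfold Tcb at hTcb
      rw [if_neg h1, add_zero] at hTcb
      exact absurd hTcb hTc

lemma C3 (η : ℕ) (δT : ℤ) (δX : ℕ) (Λ : ℕ → ℕ → F) (hη : 2 ≤ η)
    (hq2 : 2 ≤ Fintype.card F)
    (j' : ℕ) (hj' : j' < Fintype.card F) (hTcb : Tcb F η δT δX Λ j' ≠ 0) :
    ((Finset.univ.filter (fun a : F => pA F η δT δX Λ a = 0)).card : ℤ)
      ≤ Rj η δT δX j' := by
  by_cases hTc : Tc F η δT δX Λ j' ≠ 0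
  · have hg : gam F η δT δX Λ j' ≠ 0 := Tc_ne_imp F η δT δX Λ _ hTc
    have hR : 0 ≤ Rj η δT δX j' := (gam_ne_imp F η δT δX Λ _ hg).2
    have hGb : Gb F η δT δX Λ j' ≠ 0 := by
      intro h0
      apply hTc
      rw [← Gb_coeff_top F η δT δX Λ (by omega) hq2 j' hR, h0, Polynomial.coeff_zero]
    exact C1 F η δT δX Λ hq2 j' hj' hGb
  · push_neg at hTc
    have h1 : 1 ≤ j' := by
      by_contra h1
      unfold Tcb at hTcb
      rw [if_neg h1, add_zero] at hTcb
      exact hTcb hTc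
    have h2 : Tc F η δT δX Λ (j' + (Fintype.card F - 1)) ≠ 0 := by
      unfold Tcb at hTcb
      rw [if_pos h1, hTc, zero_add] at hTcb
      exact hTcb
    have hg2 : gam F η δT δX Λ (j' + (Fintype.card F - 1)) ≠ 0 := Tc_ne_imp F η δT δX Λ _ h2
    have hR2 : 0 ≤ Rj η δT δX (j' + (Fintype.card F - 1)) := (gam_ne_imp F η δT δX Λ _ hg2).2
    have key : ((Fintype.card F:ℤ)) ≤ Rj η δT δX j' := by
      rw [Rj_eq] at hR2 ⊢
      have hc : ((j' + (Fintype.card F - 1) : ℕ) : ℤ) = (j':ℤ) + ((Fintype.card F:ℤ) - 1) := by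
        omega
      rw [hc] at hR2
      have hη' : (2:ℤ) ≤ η := by exact_mod_cast hη
      have hq' : (2:ℤ) ≤ (Fintype.card F:ℤ) := by exact_mod_cast hq2
      nlinarith
    have hz1' : ((Finset.univ.filter (fun a : F => pA F η δT δX Λ a = 0)).card : ℤ)
        ≤ (Fintype.card F:ℤ) := by
      have := Finset.card_filter_le (Finset.univ : Finset F) (fun a : F => pA F η δT δX Λ a = 0)
      simp only [Finset.card_univ] at this
      exact_mod_cast this
    linarith

lemma C5 (η : ℕ) (δT : ℤ) (δX : ℕ) (Λ : ℕ → ℕ → F) (hq2 : 2 ≤ Fintype.card F)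
    (hδT : δT < (Fintype.card F:ℤ))
    (hz1 : (Finset.univ.filter (fun a : F => pA F η δT δX Λ a = 0)).card = Fintype.card F)
    (hγ : gam F η δT δX Λ δX ≠ 0) : Fintype.card F ≤ δX := by
  by_contra hcon
  push_neg at hcon
  have hGb : Gb F η δT δX Λ δX = gam F η δT δX Λ δX := by
    unfold Gb
    split_ifs with h1
    · have : gam F η δT δX Λ (δX + (Fintype.card F - 1)) = 0 := by
        by_contra hne
        have := (gam_ne_imp F η δT δX Λ _ hne).1
        omega
      rw [this, add_zero]
    · rw [add_zero]
  have hGbne : Gb F η δT δX Λ δX ≠ 0 := by rw [hGb]; exact hγ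
  have := C1 F η δT δX Λ hq2 δX hcon hGbne
  rw [hz1] at this
  have hRδX : Rj η δT δX δX = δT := by unfold Rj; simp
  rw [hRδX] at this
  omega

lemma C4 (η : ℕ) (δT : ℤ) (δX : ℕ) (Λ : ℕ → ℕ → F) (hη : 2 ≤ η)
    (hδT : δT < (Fintype.card F:ℤ))
    (hγ : gam F η δT δX Λ δX ≠ 0) (hqδX : Fintype.card F ≤ δX) :
    0 ≤ δT ∧ δT * η ≤ δT + (η:ℤ)*δX - Fintype.card F := by
  have hR : 0 ≤ Rj η δT δX δX := (gam_ne_imp F η δT δX Λ _ hγ).2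
  have hRδX : Rj η δT δX δX = δT := by unfold Rj; simp
  rw [hRδX] at hR
  refine ⟨hR, ?_⟩
  have h1 : (η:ℤ) * Fintype.card F ≤ (η:ℤ)*δX := by
    refine mul_le_mul_of_nonneg_left ?_ (by positivity)
    exact_mod_cast hqδX
  have hη' : (2:ℤ) ≤ η := by exact_mod_cast hη
  nlinarith

lemma natDegree_pA (η : ℕ) (δT : ℤ) (δX : ℕ) (Λ : ℕ → ℕ → F) (a : F) :
    (pA F η δT δX Λ a).natDegree ≤ Fintype.card F - 1 :=
  natDegree_sumCX F _ _ _ (by omega)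

lemma natDegree_gbar (η : ℕ) (δT : ℤ) (δX : ℕ) (Λ : ℕ → ℕ → F) :
    (gbar F η δT δX Λ).natDegree ≤ Fintype.card F - 1 :=
  natDegree_sumCX F _ _ _ (by omega)

lemma pA_deg_le (η : ℕ) (δT : ℤ) (δX : ℕ) (Λ : ℕ → ℕ → F) (a : F) (Jn : ℕ)
    (hact : ∀ j' < Fintype.card F, Gb F η δT δX Λ j' ≠ 0 → j' ≤ Jn) :
    (pA F η δT δX Λ a).natDegree ≤ Jn := by
  rw [Polynomial.natDegree_le_iff_coeff_eq_zero]
  intro n hn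
  have hco := coeff_sumCX F (fun k => Polynomial.eval a (Gb F η δT δX Λ k)) (Fintype.card F) n
  show (sumCX F (fun k => Polynomial.eval a (Gb F η δT δX Λ k)) (Fintype.card F)).coeff n = 0
  rw [hco]
  split_ifs with h
  · have hGb : Gb F η δT δX Λ n = 0 := by
      by_contra hne
      exact absurd (hact n h hne) (by omega)
    rw [hGb, Polynomial.eval_zero]
  · rfl

lemma gbar_deg_le (η : ℕ) (δT : ℤ) (δX : ℕ) (Λ : ℕ → ℕ → F) (Jn : ℕ)
    (hact : ∀ j' < Fintype.card F, Tcb F η δT δX Λ j' ≠ 0 → j' ≤ Jn) :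
    (gbar F η δT δX Λ).natDegree ≤ Jn := by
  rw [Polynomial.natDegree_le_iff_coeff_eq_zero]
  intro n hn
  have hco := coeff_sumCX F (Tcb F η δT δX Λ) (Fintype.card F) n
  show (sumCX F (Tcb F η δT δX Λ) (Fintype.card F)).coeff n = 0
  rw [hco]
  split_ifs with h
  · by_contra hne
    exact absurd (hact n h hne) (by omega)
  · rfl

lemma fiber_bound (η : ℕ) (δT : ℤ) (δX : ℕ) (Λ : ℕ → ℕ → F) (hη : 2 ≤ η)
    (hq2 : 2 ≤ Fintype.card F)
    (hδlt : δT + (η:ℤ)*δX < ((η:ℤ)+1) * Fintype.card F) (a : F) (Jn : ℕ)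
    (hdeg : (pA F η δT δX Λ a).natDegree ≤ Jn) (hne : pA F η δT δX Λ a ≠ 0) :
    Fintype.card F - Jn
      ≤ (Finset.univ.filter (fun b : F => vL F η δT δX Λ (Sum.inl (a, b)) ≠ 0)).card := by
  have heq : (Finset.univ.filter (fun b : F => vL F η δT δX Λ (Sum.inl (a, b)) ≠ 0))
      = (Finset.univ.filter (fun b : F => Polynomial.eval b (pA F η δT δX Λ a) ≠ 0)) := by
    ext b
    simp only [Finset.mem_filter, Finset.mem_univ, true_and]
    rw [pA_eval F η δT δX Λ hη hq2 hδlt]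
  rw [heq]
  refine le_trans (by omega) (card_eval_ne_zero F _ hne)

lemma g_bound (η : ℕ) (δT : ℤ) (δX : ℕ) (Λ : ℕ → ℕ → F) (hη : 2 ≤ η)
    (hq2 : 2 ≤ Fintype.card F)
    (hδlt : δT + (η:ℤ)*δX < ((η:ℤ)+1) * Fintype.card F) (Jn : ℕ)
    (hdeg : (gbar F η δT δX Λ).natDegree ≤ Jn) (hne : gbar F η δT δX Λ ≠ 0) :
    Fintype.card F - Jn
      ≤ (Finset.univ.filter (fun b : F => vL F η δT δX Λ (Sum.inr (Sum.inl b)) ≠ 0)).card := by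
  have heq : (Finset.univ.filter (fun b : F => vL F η δT δX Λ (Sum.inr (Sum.inl b)) ≠ 0))
      = (Finset.univ.filter (fun b : F => Polynomial.eval b (gbar F η δT δX Λ) ≠ 0)) := by
    ext b
    simp only [Finset.mem_filter, Finset.mem_univ, true_and]
    rw [gbar_eval F η δT δX Λ hη hq2 hδlt]
  rw [heq]
  refine le_trans (by omega) (card_eval_ne_zero F _ hne)

lemma h_bound (η : ℕ) (δT : ℤ) (δX : ℕ) (Λ : ℕ → ℕ → F) (Jn : ℕ)
    (hdeg : (gam F η δT δX Λ δX).natDegree ≤ Jn) (hne : gam F η δT δX Λ δX ≠ 0) :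
    Fintype.card F - Jn
      ≤ (Finset.univ.filter (fun a : F => vL F η δT δX Λ (Sum.inr (Sum.inr (Sum.inl a))) ≠ 0)).card := by
  have heq : (Finset.univ.filter (fun a : F => vL F η δT δX Λ (Sum.inr (Sum.inr (Sum.inl a))) ≠ 0))
      = (Finset.univ.filter (fun a : F => Polynomial.eval a (gam F η δT δX Λ δX) ≠ 0)) := by
    ext a
    simp only [Finset.mem_filter, Finset.mem_univ, true_and]
    rw [vLh]
  rw [heq]
  refine le_trans (by omega) (card_eval_ne_zero F _ hne)

lemma arith_final (q s J m : ℤ) (hq : 2 ≤ q) (hs1 : 1 ≤ s) (hm0 : 0 ≤ m)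
    (hsmall : s ≤ q - m - 1) (h2Jm : 2*(J - m) ≤ s) : q - m ≤ s * (q - J) := by
  rcases eq_or_lt_of_le hs1 with h1 | h2
  · have hJm : J ≤ m := by linarith
    calc q - m ≤ q - J := by linarith
      _ = 1 * (q - J) := (one_mul _).symm
      _ = s * (q - J) := by rw [← h1]
  · have hs2 : 2 ≤ s := h2
    nlinarith [mul_le_mul_of_nonneg_left (show 2*(q - m) - s ≤ 2*(q - J) by linarith)
        (show (0:ℤ) ≤ s by linarith),
      mul_le_mul_of_nonneg_left (show s + 1 ≤ q - m by linarith)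
        (show (0:ℤ) ≤ 2*(s-1) by linarith)]

lemma core_bound (η : ℕ) (δT : ℤ) (δX : ℕ) (Λ : ℕ → ℕ → F) (hη : 2 ≤ η)
    (hq2 : 2 ≤ Fintype.card F)
    (hqδ : (Fintype.card F:ℤ) ≤ δT + (η:ℤ)*δX)
    (hδlt : δT + (η:ℤ)*δX < ((η:ℤ)+1) * Fintype.card F)
    (hδT : δT < (Fintype.card F:ℤ))
    (hv : vL F η δT δX Λ ≠ 0) :
    Fintype.card F - ((δT + (η:ℤ)*δX - Fintype.card F) / η).toNat
      ≤ wt F (vL F η δT δX Λ) := by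
  classical
  have hη' : (2:ℤ) ≤ η := by exact_mod_cast hη
  have hq' : (2:ℤ) ≤ (Fintype.card F:ℤ) := by exact_mod_cast hq2
  set q := Fintype.card F with hqdef
  set mI : ℤ := (δT + (η:ℤ)*δX - q) / η with hmI
  set mn : ℕ := mI.toNat with hmn
  have hηpos : (0:ℤ) < η := by linarith
  have hηne : (η:ℤ) ≠ 0 := by linarith
  have hdiv := Int.mul_ediv_add_emod (δT + (η:ℤ)*δX - q) η
  have hrem0 : 0 ≤ (δT + (η:ℤ)*δX - q) % η := Int.emod_nonneg _ hηne
  have hremlt : (δT + (η:ℤ)*δX - q) % η < η := Int.emod_lt_of_pos _ hηpos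
  have hm0 : 0 ≤ mI := Int.ediv_nonneg (by linarith) (le_of_lt hηpos)
  have hmcast : (mn:ℤ) = mI := Int.toNat_of_nonneg hm0
  have hmlow : (η:ℤ)*mI ≤ δT + (η:ℤ)*δX - q := by linarith
  have hmhigh : δT + (η:ℤ)*δX - q ≤ (η:ℤ)*mI + η - 1 := by linarith
  have hmq : mI < (q:ℤ) := by
    by_contra hcon
    push_neg at hcon
    have h1 : (η:ℤ)*q ≤ (η:ℤ)*mI := mul_le_mul_of_nonneg_left hcon (by linarith)
    linarith
  have hmnq : mn < q := by omega
  have hwt := wt_eq F (vL F η δT δX Λ)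
  set NF := (Finset.univ.filter (fun ab : F × F => vL F η δT δX Λ (Sum.inl ab) ≠ 0)).card with hNFdef
  set NG := (Finset.univ.filter (fun b : F => vL F η δT δX Λ (Sum.inr (Sum.inl b)) ≠ 0)).card with hNGdef
  set NH := (Finset.univ.filter (fun a : F => vL F η δT δX Λ (Sum.inr (Sum.inr (Sum.inl a))) ≠ 0)).card with hNHdef
  set Zc := (Finset.univ.filter (fun a : F => pA F η δT δX Λ a = 0)).card with hZc
  by_cases hall : ∀ a : F, pA F η δT δX Λ a = 0
  · have hZcq : Zc = q := by
      rw [hZc, Finset.filter_true_of_mem (fun a _ => hall a), Finset.card_univ]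
    by_cases hgbar : gbar F η δT δX Λ = 0
    · obtain ⟨x, hx⟩ := Function.ne_iff.mp hv
      simp only [Pi.zero_apply] at hx
      have hγ : gam F η δT δX Λ δX ≠ 0 := by
        rcases x with ⟨a, b⟩ | b | a | u
        · exfalso
          apply hx
          rw [pA_eval F η δT δX Λ hη hq2 hδlt, hall a, Polynomial.eval_zero]
        · exfalso
          apply hx
          rw [gbar_eval F η δT δX Λ hη hq2 hδlt, hgbar, Polynomial.eval_zero]
        · intro h0
          apply hx
          rw [vLh, h0, Polynomial.eval_zero]
        · intro h0
          apply hx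
          rw [vLc]
          unfold Tc
          rw [h0, Polynomial.coeff_zero]
      have hqδX := C5 F η δT δX Λ hq2 hδT (by rw [← hZc]; exact hZcq) hγ
      obtain ⟨hδT0, hδTm⟩ := C4 F η δT δX Λ hη hδT hγ hqδX
      have hδTle : δT ≤ mI := by
        rw [hmI, Int.le_ediv_iff_mul_le hηpos]
        exact hδTm
      have hnRδX : nR η δT δX δX = δT.toNat := by
        unfold nR Rj
        simp
      have hdeg : (gam F η δT δX Λ δX).natDegree ≤ mn :=
        le_trans (gam_natDegree F η δT δX Λ δX) (by rw [hnRδX]; omega)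
      have hNH := h_bound F η δT δX Λ mn hdeg hγ
      rw [← hNHdef] at hNH
      omega
    · have hcoef : ∀ j' < q, Tcb F η δT δX Λ j' ≠ 0 → j' ≤ mn := by
        intro j' hj' hT
        have hC := C3 F η δT δX Λ hη hq2 j' hj' hT
        rw [← hZc, hZcq, Rj_eq] at hC
        have hj : (j':ℤ) * η ≤ δT + (η:ℤ)*δX - q := by
          have e : (j':ℤ)*η = (η:ℤ)*(j':ℤ) := mul_comm _ _
          rw [e]; linarith
        have : (j':ℤ) ≤ mI := by
          rw [hmI, Int.le_ediv_iff_mul_le hηpos]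
          exact hj
        omega
      have hdeg := gbar_deg_le F η δT δX Λ mn hcoef
      have hNG := g_bound F η δT δX Λ hη hq2 hδlt mn hdeg hgbar
      rw [← hNGdef] at hNG
      omega
  · push_neg at hall
    obtain ⟨a0, ha0⟩ := hall
    set S1 := Finset.univ.filter (fun a : F => ¬ (pA F η δT δX Λ a = 0)) with hS1
    have hzs : Zc + S1.card = q := by
      rw [hZc, hS1]
      have := Finset.card_filter_add_card_filter_not
        (s := (Finset.univ : Finset F)) (p := fun a : F => pA F η δT δX Λ a = 0)
      rw [Finset.card_univ] at this
      exact this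
    have hs1pos : 1 ≤ S1.card := Finset.card_pos.mpr ⟨a0, by simp [hS1, ha0]⟩
    have hNFsum : NF = ∑ a : F,
        (Finset.univ.filter (fun b : F => vL F η δT δX Λ (Sum.inl (a, b)) ≠ 0)).card := by
      rw [hNFdef]
      exact card_filter_prod (fun ab : F × F => vL F η δT δX Λ (Sum.inl ab) ≠ 0)
    set t : ℕ := if gbar F η δT δX Λ = 0 then 0 else 1 with ht
    have main : ∀ Jn : ℕ, (∀ j' < q, Gb F η δT δX Λ j' ≠ 0 → j' ≤ Jn) →
        (∀ j' < q, Tcb F η δT δX Λ j' ≠ 0 → j' ≤ Jn) →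
        S1.card * (q - Jn) + t * (q - Jn) ≤ wt F (vL F η δT δX Λ) := by
      intro Jn hactn hactg
      have hfiber : ∀ a ∈ S1, q - Jn ≤
          (Finset.univ.filter (fun b : F => vL F η δT δX Λ (Sum.inl (a, b)) ≠ 0)).card := by
        intro a ha
        refine fiber_bound F η δT δX Λ hη hq2 hδlt a Jn
          (pA_deg_le F η δT δX Λ a Jn hactn) ?_
        exact (Finset.mem_filter.mp ha).2
      have hNFge : S1.card * (q - Jn) ≤ NF := by
        calc S1.card * (q - Jn) = S1.card • (q - Jn) := by rw [smul_eq_mul]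
          _ ≤ ∑ a ∈ S1,
              (Finset.univ.filter (fun b : F => vL F η δT δX Λ (Sum.inl (a, b)) ≠ 0)).card :=
            Finset.card_nsmul_le_sum S1 _ _ hfiber
          _ ≤ ∑ a : F,
              (Finset.univ.filter (fun b : F => vL F η δT δX Λ (Sum.inl (a, b)) ≠ 0)).card :=
            Finset.sum_le_sum_of_subset (Finset.subset_univ S1)
          _ = NF := hNFsum.symm
      have hNGge : t * (q - Jn) ≤ NG := by
        rw [ht]
        split_ifs with h0
        · simp
        · rw [one_mul]
          have := g_bound F η δT δX Λ hη hq2 hδlt Jn (gbar_deg_le F η δT δX Λ Jn hactg) h0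
          rw [← hNGdef] at this
          exact this
      omega
    by_cases hbig : q - mn ≤ S1.card + t
    · have hmm := main (q-1) (fun j' hj' _ => by omega) (fun j' hj' _ => by omega)
      have h1 : q - (q-1) = 1 := by omega
      rw [h1, mul_one, mul_one] at hmm
      omega
    · push_neg at hbig
      set s : ℕ := S1.card + t with hs
      have hs1 : 1 ≤ s := by omega
      have hsmall : s ≤ q - mn - 1 := by omega
      set J : ℤ := (δT + (η:ℤ)*δX - q + s - 1)/η with hJ
      have hsZ1 : (1:ℤ) ≤ (s:ℤ) := by exact_mod_cast hs1
      have hnum0 : 0 ≤ δT + (η:ℤ)*δX - q + s - 1 := by linarith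
      have hJ0 : 0 ≤ J := Int.ediv_nonneg hnum0 (le_of_lt hηpos)
      set Jn : ℕ := J.toNat with hJn
      have hJcast : (Jn:ℤ) = J := Int.toNat_of_nonneg hJ0
      have hJdiv := Int.mul_ediv_add_emod (δT + (η:ℤ)*δX - q + s - 1) η
      have hJrem0 : 0 ≤ (δT + (η:ℤ)*δX - q + s - 1) % η := Int.emod_nonneg _ hηne
      have hJmul : (η:ℤ)*J ≤ δT + (η:ℤ)*δX - q + s - 1 := by linarith
      have hactZ : ∀ j' < q, Gb F η δT δX Λ j' ≠ 0 →
          (η:ℤ)*(j':ℤ) ≤ δT + (η:ℤ)*δX - q + s - 1 := by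
        intro j' hj' hGb
        by_cases h0 : gbar F η δT δX Λ = 0
        · have ht0 : t = 0 := by rw [ht, if_pos h0]
          have hZle : Zc ≤ q - 1 := by omega
          have hC := C2 F η δT δX Λ hη hq2 h0 (by rw [← hZc]; exact hZle) j' hj' hGb
          rw [← hZc, Rj_eq] at hC
          have hZeq : (Zc:ℤ) = (q:ℤ) - s := by omega
          linarith
        · have ht1 : t = 1 := by rw [ht, if_neg h0]
          have hC := C1 F η δT δX Λ hq2 j' hj' hGb
          rw [← hZc, Rj_eq] at hC
          have hZeq : (Zc:ℤ) = (q:ℤ) - s + 1 := by omega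
          linarith
      have hactn : ∀ j' < q, Gb F η δT δX Λ j' ≠ 0 → j' ≤ Jn := by
        intro j' hj' hGb
        have h1 : (j':ℤ) ≤ J := by
          rw [hJ, Int.le_ediv_iff_mul_le hηpos]
          have := hactZ j' hj' hGb
          have e : (j':ℤ)*η = (η:ℤ)*(j':ℤ) := mul_comm _ _
          rw [e]; linarith
        omega
      have hactg : ∀ j' < q, Tcb F η δT δX Λ j' ≠ 0 → j' ≤ Jn := by
        intro j' hj' hT
        by_cases h0 : gbar F η δT δX Λ = 0
        · exfalso
          apply hT
          have h1 : (gbar F η δT δX Λ).coeff j' = Tcb F η δT δX Λ j' := by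
            have := coeff_sumCX F (Tcb F η δT δX Λ) q j'
            rwa [if_pos hj'] at this
          rw [h0, Polynomial.coeff_zero] at h1
          exact h1.symm
        · have ht1 : t = 1 := by rw [ht, if_neg h0]
          have hC := C3 F η δT δX Λ hη hq2 j' hj' hT
          rw [← hZc, Rj_eq] at hC
          have hZeq : (Zc:ℤ) = (q:ℤ) - s + 1 := by omega
          have h1 : (j':ℤ) ≤ J := by
            rw [hJ, Int.le_ediv_iff_mul_le hηpos]
            have e : (j':ℤ)*η = (η:ℤ)*(j':ℤ) := mul_comm _ _
            rw [e]; linarith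
          omega
      have hmm := main Jn hactn hactg
      rw [← add_mul, ← hs] at hmm
      have h2Jm : 2*(J - mI) ≤ (s:ℤ) := by
        rcases le_or_gt J mI with h | h
        · linarith
        · have hd1 : (0:ℤ) ≤ J - mI - 1 := by linarith
          have hkey : (η:ℤ)*(J - mI - 1) ≤ (s:ℤ) - 2 := by
            have e : (η:ℤ)*(J - mI - 1) = (η:ℤ)*J - (η:ℤ)*mI - η := by ring
            rw [e]; linarith
          have h2 : 2*(J - mI - 1) ≤ (η:ℤ)*(J - mI - 1) :=
            mul_le_mul_of_nonneg_right hη' hd1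
          linarith
      have hsZsm : (s:ℤ) ≤ (q:ℤ) - mI - 1 := by omega
      have hJq : J ≤ (q:ℤ) - 1 := by linarith
      have hcast1 : ((q - Jn : ℕ):ℤ) = (q:ℤ) - J := by omega
      have hcast2 : ((q - mn : ℕ):ℤ) = (q:ℤ) - mI := by omega
      have hfinal := arith_final (q:ℤ) (s:ℤ) J mI hq' hsZ1 hm0 hsZsm h2Jm
      have hN : q - mn ≤ s * (q - Jn) := by
        have hZ : ((q - mn : ℕ):ℤ) ≤ ((s * (q - Jn) : ℕ):ℤ) := by
          rw [hcast2, Nat.cast_mul, hcast1]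
          exact hfinal
        exact_mod_cast hZ
      omega

section Upper

variable (η : ℕ) (δT : ℤ) (δX : ℕ)

noncomputable def wB (B : Finset F) : Polynomial F := ∏ x ∈ B, (Polynomial.X - Polynomial.C x)

lemma wB_monic (B : Finset F) : (wB F B).Monic :=
  Polynomial.monic_prod_of_monic _ _ (fun x _ => Polynomial.monic_X_sub_C x)

lemma wB_natDegree (B : Finset F) : (wB F B).natDegree = B.card := by
  unfold wB
  rw [Polynomial.natDegree_prod_of_monic _ _ (fun x _ => Polynomial.monic_X_sub_C x)]
  simp

lemma wB_coeff_hi (B : Finset F) (j : ℕ) (hj : B.card < j) : (wB F B).coeff j = 0 := by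
  refine Polynomial.coeff_eq_zero_of_natDegree_lt ?_
  rw [wB_natDegree]
  omega

lemma wB_eval_ne (B : Finset F) (b : F) : Polynomial.eval b (wB F B) ≠ 0 ↔ b ∉ B := by
  unfold wB
  rw [Polynomial.eval_prod]
  rw [Finset.prod_ne_zero_iff]
  constructor
  · intro h hb
    have := h b hb
    simp at this
  · intro hb x hx
    simp only [Polynomial.eval_sub, Polynomial.eval_X, Polynomial.eval_C, sub_ne_zero]
    intro he
    exact hb (he ▸ hx)

noncomputable def ΛUp (B : Finset F) : ℕ → ℕ → F :=
  fun j i => (wB F B).coeff j *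
    (if i = Fintype.card F - 1 then 1 else if i = 0 then -1 else 0)

end Upper

lemma upper_aux (η : ℕ) (δT : ℤ) (δX : ℕ) (B : Finset F) (hη : 2 ≤ η)
    (hq2 : 2 ≤ Fintype.card F)
    (hBmn : ((η:ℤ)) * B.card ≤ δT + (η:ℤ)*δX - Fintype.card F)
    (hBδX : B.card < δX) :
    (∀ a b : F, vL F η δT δX (ΛUp F B) (Sum.inl (a, b))
        = (a^(Fintype.card F - 1) - 1) * Polynomial.eval b (wB F B))
    ∧ (∀ b : F, vL F η δT δX (ΛUp F B) (Sum.inr (Sum.inl b)) = 0)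
    ∧ (∀ a : F, vL F η δT δX (ΛUp F B) (Sum.inr (Sum.inr (Sum.inl a))) = 0)
    ∧ (∀ u : Unit, vL F η δT δX (ΛUp F B) (Sum.inr (Sum.inr (Sum.inr u))) = 0) := by
  have hRge : ∀ j : ℕ, j ≤ B.card → (Fintype.card F:ℤ) ≤ Rj η δT δX j := by
    intro j hj
    rw [Rj_eq]
    have h1 : (η:ℤ)*(j:ℤ) ≤ (η:ℤ)*(B.card:ℤ) := by
      refine mul_le_mul_of_nonneg_left ?_ (by positivity)
      exact_mod_cast hj
    linarith
  have hnRge : ∀ j : ℕ, j ≤ B.card → Fintype.card F ≤ nR η δT δX j := by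
    intro j hj
    have := hRge j hj
    unfold nR
    omega
  have hRpos : ∀ j : ℕ, j ≤ B.card → 0 ≤ Rj η δT δX j := by
    intro j hj
    have := hRge j hj
    omega
  have hinner : ∀ (j : ℕ) (a b : F), j ≤ δX →
      (∑ i ∈ Finset.range (nR η δT δX j + 1),
        (if 0 ≤ Rj η δT δX j then ΛUp F B j i else 0) * a^i * b^j)
      = (wB F B).coeff j * (a^(Fintype.card F - 1) - 1) * b^j := by
    intro j a b hjδX
    by_cases hjm : j ≤ B.card
    · have hg := hRpos j hjm
      have hnR := hnRge j hjm
      have hsplit : ∀ i : ℕ,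
          (if 0 ≤ Rj η δT δX j then ΛUp F B j i else 0) * a^i * b^j
          = (if i = Fintype.card F - 1 then (wB F B).coeff j * a^i * b^j else 0)
            + (if i = 0 then -((wB F B).coeff j * a^i * b^j) else 0) := by
        intro i
        rw [if_pos hg]
        unfold ΛUp
        split_ifs with h1 h2
        · omega
        · ring
        · ring
        · ring
      rw [Finset.sum_congr rfl (fun i _ => hsplit i), Finset.sum_add_distrib]
      rw [Finset.sum_eq_single (Fintype.card F - 1)]
      rotate_left
      · intro i hi hne
        rw [if_neg hne]
      · intro hmem
        exfalso
        apply hmem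
        rw [Finset.mem_range]
        omega
      rw [Finset.sum_eq_single 0]
      rotate_left
      · intro i hi hne
        rw [if_neg hne]
      · intro hmem
        exfalso
        apply hmem
        rw [Finset.mem_range]
        omega
      rw [if_pos rfl, if_pos rfl, pow_zero]
      ring
    · push_neg at hjm
      have hco : (wB F B).coeff j = 0 := wB_coeff_hi F B j hjm
      rw [hco]
      rw [Finset.sum_eq_zero]
      · ring
      · intro i hi
        unfold ΛUp
        rw [hco]
        split_ifs <;> ring
  refine ⟨?_, ?_, ?_, ?_⟩
  · intro a b
    show (∑ j ∈ Finset.range (δX+1), ∑ i ∈ Finset.range (nR η δT δX j + 1),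
        (if 0 ≤ Rj η δT δX j then ΛUp F B j i else 0) * a^i * b^j) = _
    rw [Finset.sum_congr rfl (fun j hj => hinner j a b (by
      rw [Finset.mem_range] at hj; omega))]
    have hev : Polynomial.eval b (wB F B)
        = ∑ j ∈ Finset.range (δX+1), (wB F B).coeff j * b^j := by
      rw [Polynomial.eval_eq_sum_range' (n := δX+1) (by rw [wB_natDegree]; omega) b]
    rw [hev, Finset.mul_sum]
    refine Finset.sum_congr rfl (fun j hj => by ring)
  · intro b
    show (∑ j ∈ Finset.range (δX+1),
        (if 0 ≤ Rj η δT δX j then ΛUp F B j (nR η δT δX j) else 0) * b^j) = 0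
    refine Finset.sum_eq_zero (fun j hj => ?_)
    by_cases hjm : j ≤ B.card
    · rw [if_pos (hRpos j hjm)]
      unfold ΛUp
      have h1 : ¬ (nR η δT δX j = Fintype.card F - 1) := by have := hnRge j hjm; omega
      have h2 : ¬ (nR η δT δX j = 0) := by have := hnRge j hjm; omega
      rw [if_neg h1, if_neg h2]
      ring
    · push_neg at hjm
      have hco : (wB F B).coeff j = 0 := wB_coeff_hi F B j hjm
      have : ΛUp F B j (nR η δT δX j) = 0 := by
        unfold ΛUp
        rw [hco]
        split_ifs <;> ring
      rw [this]
      split_ifs <;> ring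
  · intro a
    show (∑ i ∈ Finset.range (nR η δT δX δX + 1),
        (if 0 ≤ Rj η δT δX δX then ΛUp F B δX i else 0) * a^i) = 0
    refine Finset.sum_eq_zero (fun i hi => ?_)
    have : ΛUp F B δX i = 0 := by
      unfold ΛUp
      rw [wB_coeff_hi F B δX hBδX]
      split_ifs <;> ring
    rw [this]
    split_ifs <;> ring
  · intro u
    show (if 0 ≤ Rj η δT δX δX then ΛUp F B δX (nR η δT δX δX) else 0) = 0
    have : ΛUp F B δX (nR η δT δX δX) = 0 := by
      unfold ΛUp
      rw [wB_coeff_hi F B δX hBδX]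
      split_ifs <;> ring
    rw [this]
    split_ifs <;> rfl

lemma upper_exists (η : ℕ) (δT : ℤ) (δX : ℕ) (hη : 2 ≤ η)
    (hq2 : 2 ≤ Fintype.card F)
    (hqδ : (Fintype.card F:ℤ) ≤ δT + (η:ℤ)*δX)
    (hδlt : δT + (η:ℤ)*δX < ((η:ℤ)+1) * Fintype.card F)
    (hδT : δT < (Fintype.card F:ℤ)) :
    ∃ v ∈ Code F η δT δX, v ≠ 0 ∧
      wt F v = Fintype.card F - ((δT + (η:ℤ)*δX - Fintype.card F)/η).toNat := by
  classical
  have hη' : (2:ℤ) ≤ η := by exact_mod_cast hη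
  set q := Fintype.card F with hqdef
  set mI : ℤ := (δT + (η:ℤ)*δX - q) / η with hmI
  set mn : ℕ := mI.toNat with hmn
  have hηpos : (0:ℤ) < η := by linarith
  have hηne : (η:ℤ) ≠ 0 := by linarith
  have hdiv := Int.mul_ediv_add_emod (δT + (η:ℤ)*δX - q) η
  have hrem0 : 0 ≤ (δT + (η:ℤ)*δX - q) % η := Int.emod_nonneg _ hηne
  have hremlt : (δT + (η:ℤ)*δX - q) % η < η := Int.emod_lt_of_pos _ hηpos
  have hm0 : 0 ≤ mI := Int.ediv_nonneg (by linarith) (le_of_lt hηpos)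
  have hmcast : (mn:ℤ) = mI := Int.toNat_of_nonneg hm0
  have hmlow : (η:ℤ)*mI ≤ δT + (η:ℤ)*δX - q := by linarith
  have hmq : mI < (q:ℤ) := by
    by_contra hcon
    push_neg at hcon
    have h1 : (η:ℤ)*q ≤ (η:ℤ)*mI := mul_le_mul_of_nonneg_left hcon (by linarith)
    linarith
  have hmδX : mI < (δX:ℤ) := by
    by_contra hcon
    push_neg at hcon
    have h1 : (η:ℤ)*δX ≤ (η:ℤ)*mI := mul_le_mul_of_nonneg_left hcon (by linarith)
    linarith
  have hmnq : mn < q := by omega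
  have hmnδX : mn < δX := by omega
  obtain ⟨B, hBsub, hBcard⟩ := (Finset.univ : Finset F).exists_subset_card_eq
    (show mn ≤ (Finset.univ : Finset F).card by rw [Finset.card_univ]; omega)
  have hBmn : ((η:ℤ)) * B.card ≤ δT + (η:ℤ)*δX - q := by
    rw [hBcard]
    rw [show ((mn:ℕ):ℤ) = mI from hmcast]
    exact hmlow
  have hBδX : B.card < δX := by omega
  obtain ⟨hA, hG, hH, hC⟩ := upper_aux F η δT δX B hη hq2 hBmn hBδX
  refine ⟨vL F η δT δX (ΛUp F B), ?_, ?_, ?_⟩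
  · rw [← ev_PLam]
    exact ev_mem_code F η δT δX _ (PLam_mem F η δT δX _)
  · have hex : ∃ b : F, b ∉ B := by
      have hcompl : (Bᶜ : Finset F).card = q - mn := by
        rw [Finset.card_compl, hBcard]
      have hpos : 0 < (Bᶜ : Finset F).card := by omega
      obtain ⟨b, hb⟩ := Finset.card_pos.mp hpos
      exact ⟨b, Finset.mem_compl.mp hb⟩
    obtain ⟨b, hb⟩ := hex
    intro h0
    have hval := congrFun h0 (Sum.inl ((0:F), b))
    simp only [Pi.zero_apply] at hval
    rw [hA 0 b] at hval
    rw [zero_pow (by omega : q - 1 ≠ 0), zero_sub, neg_one_mul] at hval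
    exact ((wB_eval_ne F B b).mpr hb) (neg_eq_zero.mp hval)
  · rw [wt_eq]
    have hNG : (Finset.univ.filter
        (fun b : F => vL F η δT δX (ΛUp F B) (Sum.inr (Sum.inl b)) ≠ 0)).card = 0 := by
      rw [Finset.card_eq_zero, Finset.filter_eq_empty_iff]
      intro b _
      rw [hG b]
      simp
    have hNH : (Finset.univ.filter
        (fun a : F => vL F η δT δX (ΛUp F B) (Sum.inr (Sum.inr (Sum.inl a))) ≠ 0)).card = 0 := by
      rw [Finset.card_eq_zero, Finset.filter_eq_empty_iff]
      intro a _
      rw [hH a]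
      simp
    have hNC : (if vL F η δT δX (ΛUp F B) (Sum.inr (Sum.inr (Sum.inr ()))) ≠ 0
        then 1 else 0) = 0 := by
      rw [hC ()]
      simp
    have hNF : (Finset.univ.filter
        (fun ab : F × F => vL F η δT δX (ΛUp F B) (Sum.inl ab) ≠ 0))
        = {(0:F)} ×ˢ (Bᶜ : Finset F) := by
      ext ⟨a, b⟩
      simp only [Finset.mem_filter, Finset.mem_univ, true_and, Finset.mem_product,
        Finset.mem_singleton, Finset.mem_compl]
      rw [hA a b]
      constructor
      · intro hne
        constructor
        · by_contra ha
          apply hne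
          rw [FiniteField.pow_card_sub_one_eq_one a ha, sub_self, zero_mul]
        · intro hbB
          apply hne
          have hz : Polynomial.eval b (wB F B) = 0 := by
            by_contra h'
            exact ((wB_eval_ne F B b).mp h') hbB
          rw [hz, mul_zero]
      · rintro ⟨rfl, hbB⟩
        rw [zero_pow (by omega : q - 1 ≠ 0), zero_sub, neg_one_mul]
        intro h0
        exact ((wB_eval_ne F B b).mpr hbB) (neg_eq_zero.mp h0)
    rw [hNF, hNG, hNH, hNC, Finset.card_product, Finset.card_singleton, one_mul,
      Finset.card_compl, hBcard]
    omega

/-- for `η ≥ 2` and `max(δ/(η+1), δT) < q ≤ δ`,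
`d_η(δT,δX) = q − ⌊(δ−q)/η⌋`. -/
theorem statement16 (η : ℕ) (δT : ℤ) (δX : ℕ) (hη : 2 ≤ η)
    (hδ : 0 ≤ δT + (η : ℤ) * (δX : ℤ))
    (hlt : max (((δT + (η : ℤ) * (δX : ℤ) : ℤ) : ℚ) / ((η : ℚ) + 1)) ((δT : ℚ))
      < (Fintype.card F : ℚ))
    (hle : (Fintype.card F : ℤ) ≤ δT + (η : ℤ) * (δX : ℤ)) :
    (dmin F η δT δX : ℤ) =
      (Fintype.card F : ℤ) -
        (δT + (η : ℤ) * (δX : ℤ) - (Fintype.card F : ℤ)) / (η : ℤ) := by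
  have hq2 : 2 ≤ Fintype.card F := Fintype.one_lt_card
  have h1 := lt_of_le_of_lt (le_max_left _ _) hlt
  have hpos : (0:ℚ) < (η:ℚ) + 1 := by positivity
  rw [div_lt_iff₀ hpos] at h1
  have hδlt : δT + (η:ℤ)*δX < ((η:ℤ)+1) * Fintype.card F := by
    have h2 : ((δT + (η:ℤ)*δX : ℤ):ℚ) < (((η:ℤ)+1 : ℤ):ℚ) * ((Fintype.card F : ℤ):ℚ) := by
      push_cast at h1 ⊢
      linarith
    exact_mod_cast h2
  have hδT : δT < (Fintype.card F:ℤ) := by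
    have h3 := lt_of_le_of_lt (le_max_right _ _) hlt
    exact_mod_cast h3
  obtain ⟨v0, hv0mem, hv0ne, hv0wt⟩ := upper_exists F η δT δX hη hq2 hle hδlt hδT
  set dN := Fintype.card F - ((δT + (η:ℤ)*δX - Fintype.card F)/η).toNat with hdN
  have hmemW : dN ∈ {w : ℕ | ∃ v ∈ Code F η δT δX, v ≠ 0 ∧ wt F v = w} :=
    ⟨v0, hv0mem, hv0ne, hv0wt⟩
  have hlbW : ∀ w ∈ {w : ℕ | ∃ v ∈ Code F η δT δX, v ≠ 0 ∧ wt F v = w}, dN ≤ w := by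
    rintro w ⟨v, hvmem, hvne, rfl⟩
    obtain ⟨Λ, rfl⟩ := code_rep F η δT δX v hvmem
    exact core_bound F η δT δX Λ hη hq2 hle hδlt hδT hvne
  have hd : dmin F η δT δX = dN := by
    unfold dmin
    exact le_antisymm (Nat.sInf_le hmemW) (le_csInf ⟨dN, hmemW⟩ hlbW)
  rw [hd, hdN]
  have hηpos : (0:ℤ) < η := by exact_mod_cast (by omega : 0 < η)
  have hηne : (η:ℤ) ≠ 0 := by omega
  have hdiv := Int.mul_ediv_add_emod (δT + (η:ℤ)*δX - Fintype.card F) η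
  have hrem0 : 0 ≤ (δT + (η:ℤ)*δX - Fintype.card F) % η := Int.emod_nonneg _ hηne
  have hremlt : (δT + (η:ℤ)*δX - Fintype.card F) % η < η := Int.emod_lt_of_pos _ hηpos
  have hm0 : 0 ≤ (δT + (η:ℤ)*δX - Fintype.card F)/η :=
    Int.ediv_nonneg (by linarith) (le_of_lt hηpos)
  have hmq : (δT + (η:ℤ)*δX - Fintype.card F)/η < (Fintype.card F:ℤ) := by
    by_contra hcon
    push_neg at hcon
    have hq' : (2:ℤ) ≤ (Fintype.card F:ℤ) := by exact_mod_cast hq2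
    have h1' : (η:ℤ)*Fintype.card F ≤ (η:ℤ)*((δT + (η:ℤ)*δX - Fintype.card F)/η) :=
      mul_le_mul_of_nonneg_left hcon (by linarith)
    have hη' : (2:ℤ) ≤ (η:ℤ) := by exact_mod_cast hη
    linarith
  omega

end Hirz
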